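/- Let P and Q be mr×mr circulant-block permutation matrices derived from m×m permutation matrices B_P and B_Q respectively (i.e., P = diag(I_{p_1}^r,…,I_{p_m}^r)·(B_P ⊗ I_0^r) and similarly for Q). If the product B_P B_Q has no fixed column, then the product PQ has no fixed column. -/

import Mathlib

open Kronecker

/-- The `r × r` circulant permutation matrix `I_s^r`. -/
def circ (r s : ℕ) : Matrix (Fin r) (Fin r) ℤ :=
  Matrix.of fun i j => if (j : ℕ) = ((i : ℕ) + s) % r then 1 else 0

/-- The `mr × mr` block-diagonal matrix `diag(A_1, …, A_m)`. -/
def blockDiag {m r : ℕ} (A : Fin m → Matrix (Fin r) (Fin r) ℤ) :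
    Matrix (Fin m × Fin r) (Fin m × Fin r) ℤ :=
  Matrix.of fun x y => if x.1 = y.1 then A x.1 x.2 y.2 else 0

/-- A matrix has a fixed column if some column equals the corresponding column
of the identity matrix. -/
def HasFixedCol {n : Type*} [Fintype n] [DecidableEq n] (M : Matrix n n ℤ) : Prop :=
  ∃ j : n, ∀ i : n, M i j = (1 : Matrix n n ℤ) i j

lemma P_apply {m r : ℕ} (A : Fin m → Matrix (Fin r) (Fin r) ℤ) (σ : Equiv.Perm (Fin m))
    (x y : Fin m × Fin r) :
    (blockDiag A * ((σ.permMatrix ℤ) ⊗ₖ (1 : Matrix (Fin r) (Fin r) ℤ))) x y =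
      if σ x.1 = y.1 then A x.1 x.2 y.2 else 0 := by
  rw [Matrix.mul_apply, Fintype.sum_prod_type]
  simp only [blockDiag, Matrix.kroneckerMap_apply, PEquiv.toMatrix_toPEquiv_eq, Matrix.submatrix_apply, id,
    Matrix.one_apply, Matrix.of_apply]
  rw [Finset.sum_eq_single x.1]
  · simp
  · intro b _ hb; simp [Ne.symm hb]
  · simp

lemma PQ_apply {m r : ℕ} (p q : Fin m → ℕ) (σ τ : Equiv.Perm (Fin m))
    (x z : Fin m × Fin r) :
    ((blockDiag (fun k => circ r (p k)) * ((σ.permMatrix ℤ) ⊗ₖ (1 : Matrix (Fin r) (Fin r) ℤ))) *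
       (blockDiag (fun k => circ r (q k)) * ((τ.permMatrix ℤ) ⊗ₖ (1 : Matrix (Fin r) (Fin r) ℤ))))
       x z =
      if τ (σ x.1) = z.1 ∧ (z.2 : ℕ) = ((x.2 : ℕ) + (p x.1 + q (σ x.1))) % r then 1 else 0 := by
  have hr : 0 < r := x.2.pos
  rw [Matrix.mul_apply, Fintype.sum_prod_type]
  simp only [P_apply]
  rw [Finset.sum_eq_single (σ x.1)]
  · have hlt : ((x.2 : ℕ) + p x.1) % r < r := Nat.mod_lt _ hr
    rw [Finset.sum_eq_single (⟨((x.2 : ℕ) + p x.1) % r, hlt⟩ : Fin r)]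
    · simp only [circ, Matrix.of_apply, if_pos rfl]
      by_cases h1 : τ (σ x.1) = z.1
      · simp only [h1, if_pos rfl, true_and, one_mul]
        rw [Nat.mod_add_mod, Nat.add_assoc]
        simp
      · simp [h1]
    · intro b _ hb
      have : ¬ ((b : ℕ) = ((x.2 : ℕ) + p x.1) % r) := by
        intro hc; exact hb (Fin.ext hc)
      simp [circ, this]
    · simp
  · intro b _ hb
    simp [Ne.symm hb]
  · simp

lemma perm_mul_apply {m : ℕ} (σ τ : Equiv.Perm (Fin m)) (i j : Fin m) :
    ((σ.permMatrix ℤ) * (τ.permMatrix ℤ)) i j = if τ (σ i) = j then 1 else 0 := by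
  rw [Equiv.Perm.permMatrix, PEquiv.toMatrix_toPEquiv_mul]
  simp [Matrix.submatrix_apply, PEquiv.toMatrix_toPEquiv_eq, Matrix.one_apply,
    PEquiv.toMatrix_apply, Equiv.toPEquiv_apply]

/-- If the product `B_P B_Q` of the pre-lifting permutation matrices has no
fixed column, then the product `PQ` of the corresponding circulant-block
permutation matrices has no fixed column. -/
theorem circulantBlock_no_fixedCol (m r : ℕ) (hr : 0 < r) (p q : Fin m → ℕ)
    (hp : ∀ k, p k < r) (hq : ∀ k, q k < r) (σ τ : Equiv.Perm (Fin m))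
    (h : ¬ HasFixedCol ((σ.permMatrix ℤ) * (τ.permMatrix ℤ))) :
    ¬ HasFixedCol
      ((blockDiag (fun k => circ r (p k)) * ((σ.permMatrix ℤ) ⊗ₖ (1 : Matrix (Fin r) (Fin r) ℤ))) *
       (blockDiag (fun k => circ r (q k)) * ((τ.permMatrix ℤ) ⊗ₖ (1 : Matrix (Fin r) (Fin r) ℤ)))) := by
  intro hfc
  obtain ⟨⟨j1, j2⟩, hj⟩ := hfc
  -- construct a witness row mapping to the fixed column
  set i1 : Fin m := σ.symm (τ.symm j1) with hi1
  set s : ℕ := p i1 + q (σ i1) with hs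
  have hsr : s % r < r := Nat.mod_lt _ hr
  set i2 : Fin r := ⟨((j2 : ℕ) + (r - s % r)) % r, Nat.mod_lt _ hr⟩ with hi2
  have hτσ : τ (σ i1) = j1 := by simp [hi1]
  have hcalc : (((j2 : ℕ) + (r - s % r)) % r + s) % r = (j2 : ℕ) :=
    calc (((j2 : ℕ) + (r - s % r)) % r + s) % r
        = ((j2 : ℕ) + (r - s % r) + s) % r := by rw [Nat.mod_add_mod]
      _ = (((j2 : ℕ) + (r - s % r)) % r + s % r) % r := by rw [Nat.add_mod]
      _ = ((j2 : ℕ) + (r - s % r) + s % r) % r := by rw [Nat.mod_add_mod]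
      _ = ((j2 : ℕ) + r) % r := by rw [Nat.add_assoc, Nat.sub_add_cancel (le_of_lt hsr)]
      _ = (j2 : ℕ) % r := Nat.add_mod_right _ _
      _ = (j2 : ℕ) := Nat.mod_eq_of_lt j2.isLt
  have hmod : (j2 : ℕ) = ((i2 : ℕ) + s) % r := hcalc.symm
  have key := hj (i1, i2)
  rw [PQ_apply] at key
  rw [if_pos ⟨hτσ, hmod⟩] at key
  have hij : (i1, i2) = ((j1 : Fin m), j2) := by
    by_contra hne
    rw [Matrix.one_apply_ne hne] at key
    exact one_ne_zero key
  have hfix : τ (σ j1) = j1 := by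
    have h1 : i1 = j1 := congrArg Prod.fst hij
    exact h1 ▸ hτσ
  apply h
  refine ⟨j1, fun i => ?_⟩
  rw [perm_mul_apply]
  by_cases hi : i = j1
  · subst hi; rw [if_pos hfix, Matrix.one_apply_eq]
  · rw [Matrix.one_apply_ne hi, if_neg]
    intro hc
    exact hi (σ.injective (τ.injective (hc.trans hfix.symm)))
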